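/- Let $m \geq 2$, and let $(x_1,\dots,x_{m-1})$ be the Kunz coordinate vector of a numerical semigroup $S$ with multiplicity $m$ and genus $g$. If $2g < 3m+2$, then $x_i \in \{1,2,3\}$ for every $i \in [1, m-1]$. -/

import Mathlib

theorem stmt_15 (S : Set ℕ) (h0 : 0 ∈ S) (hadd : ∀ a ∈ S, ∀ b ∈ S, a + b ∈ S)
    (hfin : Sᶜ.Finite) (m g : ℕ) (hm2 : 2 ≤ m)
    (hm : sInf (S \ {0}) = m) (hg : Sᶜ.ncard = g)
    (x : ℕ → ℕ)
    (hx : ∀ i, 1 ≤ i → i ≤ m - 1 → x i * m + i ∈ S ∧ (x i - 1) * m + i ∉ S)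
    (h : 2 * g < 3 * m + 2) :
    ∀ i, 1 ≤ i → i ≤ m - 1 → x i ∈ ({1, 2, 3} : Set ℕ) := by
  intro i hi1 hi2
  have hmpos : 0 < m := by omega
  -- S is infinite, so S \ {0} is nonempty
  have hSinf : S.Infinite := by
    have := hfin.infinite_compl
    rwa [compl_compl] at this
  have hSne : (S \ {0}).Nonempty := ((hSinf.diff (Set.finite_singleton 0)).nonempty)
  have hmS : m ∈ S := by
    have := Nat.sInf_mem hSne
    rw [hm] at this
    exact this.1
  -- adding multiples of m stays in S
  have haddm : ∀ s ∈ S, ∀ k : ℕ, s + k * m ∈ S := by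
    intro s hs k
    induction k with
    | zero => simpa using hs
    | succ n ih =>
      have := hadd _ ih m hmS
      have e : s + n * m + m = s + (n + 1) * m := by ring
      rwa [e] at this
  -- positivity of x j
  have hx1 : ∀ j, 1 ≤ j → j ≤ m - 1 → 1 ≤ x j := by
    intro j h1 h2
    by_contra hc
    have hz : x j = 0 := by omega
    obtain ⟨hin, hout⟩ := hx j h1 h2
    rw [hz] at hin hout
    simp at hin hout
    exact hout hin
  -- key characterization of membership in each residue class
  have key : ∀ j, 1 ≤ j → j ≤ m - 1 → ∀ t : ℕ, (t * m + j ∈ S ↔ x j ≤ t) := by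
    intro j h1 h2 t
    obtain ⟨hin, hout⟩ := hx j h1 h2
    constructor
    · intro ht
      by_contra hlt
      push_neg at hlt
      have hle : t ≤ x j - 1 := by omega
      obtain ⟨d, hd⟩ := Nat.exists_eq_add_of_le hle
      have := haddm _ ht d
      have e : t * m + j + d * m = (x j - 1) * m + j := by
        rw [hd]; ring
      rw [e] at this
      exact hout this
    · intro ht
      obtain ⟨d, hd⟩ := Nat.exists_eq_add_of_le ht
      have := haddm _ hin d
      have e : x j * m + j + d * m = t * m + j := by
        rw [hd]; ring
      rwa [e] at this
  -- gaps
  have hgap : ∀ j, 1 ≤ j → j ≤ m - 1 → ∀ t, t < x j → t * m + j ∈ Sᶜ := by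
    intro j h1 h2 t ht
    intro hmem
    rw [key j h1 h2 t] at hmem
    omega
  -- the finset of gaps coming from the coordinates
  set F : Finset ℕ :=
    (Finset.Icc 1 (m-1)).biUnion (fun j => (Finset.range (x j)).image (fun t => t * m + j))
    with hF
  have hFsub : (F : Set ℕ) ⊆ Sᶜ := by
    intro a ha
    simp only [hF, Finset.coe_biUnion, Set.mem_iUnion, Finset.mem_coe, Finset.mem_image,
      Finset.mem_range, Finset.mem_Icc] at ha
    obtain ⟨j, ⟨hj1, hj2⟩, t, ht, rfl⟩ := ha
    exact hgap j hj1 hj2 t ht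
  have hFcard : F.card = ∑ j ∈ Finset.Icc 1 (m-1), x j := by
    rw [hF, Finset.card_biUnion]
    · apply Finset.sum_congr rfl
      intro j hj
      rw [Finset.card_image_of_injective _ (fun a b hab => by
        have : a * m = b * m := by omega
        exact Nat.eq_of_mul_eq_mul_right hmpos this)]
      exact Finset.card_range _
    · intro j hj j' hj' hne
      rw [Finset.mem_coe, Finset.mem_Icc] at hj hj'
      rw [Function.onFun, Finset.disjoint_left]
      intro a ha ha'
      simp only [Finset.mem_image, Finset.mem_range] at ha ha'
      obtain ⟨t, ht, rfl⟩ := ha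
      obtain ⟨t', ht', he⟩ := ha'
      have hjm : j < m := by omega
      have hj'm : j' < m := by omega
      have h1 : (t * m + j) % m = j := by
        rw [Nat.add_comm, Nat.add_mul_mod_self_right, Nat.mod_eq_of_lt hjm]
      have h2 : (t' * m + j') % m = j' := by
        rw [Nat.add_comm, Nat.add_mul_mod_self_right, Nat.mod_eq_of_lt hj'm]
      rw [he, h1] at h2
      exact hne h2
  have hgsum : ∑ j ∈ Finset.Icc 1 (m-1), x j ≤ g := by
    rw [← hg, ← hFcard, ← Set.ncard_coe_finset]
    exact Set.ncard_le_ncard hFsub hfin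
  -- pair inequality
  have hiI : i ∈ Finset.Icc 1 (m-1) := Finset.mem_Icc.mpr ⟨hi1, hi2⟩
  set D : Finset ℕ := (Finset.Icc 1 (m-1)).erase i with hD
  set σ : ℕ → ℕ := fun j => if j < i then i - j else i + m - j with hσ
  have hσmem : ∀ j ∈ D, σ j ∈ D := by
    intro j hj
    rw [hD, Finset.mem_erase, Finset.mem_Icc] at hj ⊢
    simp only [hσ]
    split <;> omega
  have hσσ : ∀ j ∈ D, σ (σ j) = j := by
    intro j hj
    rw [hD, Finset.mem_erase, Finset.mem_Icc] at hj
    simp only [hσ]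
    split <;> split <;> omega
  have hpair : ∀ j ∈ D, x i ≤ x j + x (σ j) + 1 := by
    intro j hj
    have hjD := hj
    rw [hD, Finset.mem_erase, Finset.mem_Icc] at hjD
    have hkD := hσmem j hj
    rw [hD, Finset.mem_erase, Finset.mem_Icc] at hkD
    set k := σ j with hk
    obtain ⟨hjin, -⟩ := hx j hjD.2.1 hjD.2.2
    obtain ⟨hkin, -⟩ := hx k hkD.2.1 hkD.2.2
    have hsum := hadd _ hjin _ hkin
    have hjk : j + k = i ∨ j + k = i + m := by
      simp only [hk, hσ]
      split <;> omega
    rcases hjk with hjk | hjk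
    · have e : x j * m + j + (x k * m + k) = (x j + x k) * m + i := by
        have : (x j + x k) * m + i = x j * m + x k * m + (j + k) := by rw [hjk]; ring
        rw [this]; ring
      rw [e, key i hi1 hi2] at hsum
      omega
    · have e : x j * m + j + (x k * m + k) = (x j + x k + 1) * m + i := by
        have : (x j + x k + 1) * m + i = x j * m + x k * m + (j + k) := by
          rw [hjk]; ring
        rw [this]; ring
      rw [e, key i hi1 hi2] at hsum
      omega
  -- now conclude
  have hxi1 : 1 ≤ x i := hx1 i hi1 hi2
  simp only [Set.mem_insert_iff, Set.mem_singleton_iff]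
  by_contra hc
  push_neg at hc
  have hxi4 : 4 ≤ x i := by omega
  -- sum over D of x j + x (σ j) equals 2 * sum over D of x j
  have hsumσ : ∑ j ∈ D, x (σ j) = ∑ j ∈ D, x j := by
    apply Finset.sum_nbij' σ σ hσmem hσmem hσσ hσσ
    intro j hj
    rfl
  have hDcard : D.card = m - 2 := by
    rw [hD, Finset.card_erase_of_mem hiI, Nat.card_Icc]
    omega
  have hlow : 3 * (m - 2) ≤ 2 * ∑ j ∈ D, x j := by
    have : ∑ j ∈ D, (x i - 1) ≤ ∑ j ∈ D, (x j + x (σ j)) :=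
      Finset.sum_le_sum (fun j hj => by have := hpair j hj; omega)
    rw [Finset.sum_const, Finset.sum_add_distrib, hsumσ, hDcard] at this
    have h3 : 3 ≤ x i - 1 := by omega
    calc 3 * (m - 2) ≤ (m - 2) * (x i - 1) := by nlinarith
    _ ≤ ∑ j ∈ D, x j + ∑ j ∈ D, x j := by
        simpa [smul_eq_mul] using this
    _ = 2 * ∑ j ∈ D, x j := by ring
  have hsplit : ∑ j ∈ Finset.Icc 1 (m-1), x j = x i + ∑ j ∈ D, x j := by
    rw [hD, Finset.add_sum_erase _ _ hiI]
  omega
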